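/- If a local rule f : {0,1}^3 → {0,1} appears as a cell rule in some number-conserving non-uniform cyclic CA of length n ≥ 5 (where all cells use rules from {0,1}^3 → {0,1}), then f(0,0,0) = 0, f(1,1,1) = 1, and f satisfies: ((f(0,0,0)=f(1,0,0) and f(0,0,1)=f(1,0,1)) or (f(0,0,0)=f(0,0,1) and f(1,0,0)=f(1,0,1))) and ((f(0,1,0)=f(1,1,0) and f(0,1,1)=f(1,1,1)) or (f(0,1,0)=f(0,1,1) and f(1,1,0)=f(1,1,1))). -/

import Mathlib

/-- Global map of a non-uniform cyclic CA of length `n`: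
cell `i` updates via its local rule applied to `(x (i-1), x i, x (i+1))`, indices mod `n`. -/
def caStep (n : ℕ) [NeZero n] (f : Fin n → Bool → Bool → Bool → Bool)
    (x : Fin n → Bool) : Fin n → Bool :=
  fun i => f i (x (i - 1)) (x i) (x (i + 1))

/-- Number of cells in state `true` (i.e. 1). -/
def onesCount (n : ℕ) (x : Fin n → Bool) : ℕ :=
  (Finset.univ.filter fun i => x i = true).card

/-- The CA conserves the number of 1s in every configuration. -/
def numberConserving (n : ℕ) [NeZero n] (f : Fin n → Bool → Bool → Bool → Bool) : Prop :=
  ∀ x : Fin n → Bool, onesCount n (caStep n f x) = onesCount n x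

/-- The elementary CA rule with Wolfram number `R`. -/
def wolfram (R : ℕ) (a b c : Bool) : Bool :=
  R.testBit (4 * a.toNat + 2 * b.toNat + c.toNat)

/-- Structural condition on the `b = 0` half of the rule table. -/
def cond2 (f : Bool → Bool → Bool → Bool) : Prop :=
  (f false false false = f true false false ∧ f false false true = f true false true) ∨
  (f false false false = f false false true ∧ f true false false = f true false true)

/-- Structural condition on the `b = 1` half of the rule table. -/
def cond3 (f : Bool → Bool → Bool → Bool) : Prop :=
  (f false true false = f true true false ∧ f false true true = f true true true) ∨
  (f false true false = f false true true ∧ f true true false = f true true true)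

/-- A rule satisfying all structural conditions of a number conserving rule. -/
def NCrule (f : Bool → Bool → Bool → Bool) : Prop :=
  f false false false = false ∧ f true true true = true ∧ cond2 f ∧ cond3 f

lemma onesCount_eq_sum (n : ℕ) (x : Fin n → Bool) :
    onesCount n x = ∑ j, (x j).toNat := by
  rw [onesCount, Finset.card_filter]
  refine Finset.sum_congr rfl fun j _ => ?_
  cases x j <;> simp

open Fin.CommRing in
theorem stmt12 (n : ℕ) (hn : 5 ≤ n) [NeZero n] (f : Fin n → Bool → Bool → Bool → Bool)
    (h : numberConserving n f) :
    ∀ i : Fin n, NCrule (f i) := by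
  have hsum : ∀ x : Fin n → Bool,
      onesCount n (caStep n f x) = ∑ j, (f j (x (j-1)) (x j) (x (j+1))).toNat := by
    intro x; rw [onesCount_eq_sum]; rfl
  -- all-zero configuration
  have h0 : ∀ j : Fin n, f j false false false = false := by
    have hx := h (fun _ => false)
    rw [hsum, onesCount_eq_sum] at hx
    simp only [Bool.toNat_false, Finset.sum_const_zero] at hx
    intro j
    have hj := Finset.sum_eq_zero_iff.mp hx j (Finset.mem_univ j)
    cases hv : f j false false false
    · rfl
    · rw [hv] at hj; simp at hj
  -- all-one configuration
  have h1 : ∀ j : Fin n, f j true true true = true := by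
    have hx := h (fun _ => true)
    rw [hsum, onesCount_eq_sum] at hx
    simp only [Bool.toNat_true, Finset.sum_const, Finset.card_univ, Fintype.card_fin,
      smul_eq_mul, mul_one] at hx
    intro j
    by_contra hj
    have hjf : f j true true true = false := by
      cases hv : f j true true true
      · rfl
      · exact absurd hv hj
    have hlt : ∑ k : Fin n, (f k (true) (true) (true)).toNat < ∑ _k : Fin n, 1 := by
      refine Finset.sum_lt_sum (fun k _ => ?_) ⟨j, Finset.mem_univ j, ?_⟩
      · cases f k true true true <;> simp
      · rw [hjf]; simp
    simp only [Finset.sum_const, Finset.card_univ, Fintype.card_fin, smul_eq_mul,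
      mul_one] at hlt
    omega
  intro i
  set q : ℤ → Fin n := fun k => i + (k : Fin n) with hqdef
  have hqne : ∀ k l : ℤ, k ≠ l → (k - l).natAbs ≤ 4 → q k ≠ q l := by
    intro k l hkl hle he
    have h3 : (k : Fin n) = l := add_left_cancel he
    rw [← sub_eq_zero, ← Int.cast_sub, CharP.intCast_eq_zero_iff (Fin n) n] at h3
    have h4 := Int.natAbs_dvd_natAbs.mpr h3
    simp only [Int.natAbs_natCast] at h4
    have h5 : (k - l).natAbs ≠ 0 := by omega
    have := Nat.le_of_dvd (Nat.pos_of_ne_zero h5) h4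
    omega
  have hqadd : ∀ k : ℤ, q k + 1 = q (k+1) := by
    intro k; simp only [hqdef]; push_cast; ring
  have hqsub : ∀ k : ℤ, q k - 1 = q (k-1) := by
    intro k; simp only [hqdef]; push_cast; ring
  have hq0 : q 0 = i := by simp [hqdef]
  -- the key conservation identity for a window of width 3 around i over background β
  have key : ∀ (β a b c : Bool),
      (f (q (-2)) β β a).toNat + ((f (q (-1)) β a b).toNat + ((f (q 0) a b c).toNat +
        ((f (q 1) b c β).toNat + (f (q 2) c β β).toNat))) + (n - 5) * β.toNat
      = (a.toNat + (b.toNat + c.toNat)) + (n - 3) * β.toNat := by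
    intro β a b c
    set x : Fin n → Bool :=
      fun j => if j = q (-1) then a else if j = q 0 then b else if j = q 1 then c else β
      with hxdef
    have hx := h x
    rw [hsum, onesCount_eq_sum] at hx
    set s3 : Finset (Fin n) := {q (-1), q 0, q 1} with hs3def
    set s5 : Finset (Fin n) := {q (-2), q (-1), q 0, q 1, q 2} with hs5def
    -- evaluation of x
    have xoutj : ∀ m : Fin n, m ≠ q (-1) → m ≠ q 0 → m ≠ q 1 → x m = β := by
      intro m e1 e2 e3; simp [hxdef, e1, e2, e3]
    have xm1 : x (q (-1)) = a := by simp [hxdef]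
    have x0 : x (q 0) = b := by
      simp [hxdef, hqne 0 (-1) (by omega) (by omega)]
    have x1 : x (q 1) = c := by
      simp [hxdef, hqne 1 (-1) (by omega) (by omega), hqne 1 0 (by omega) (by omega)]
    have xm3 : x (q (-3)) = β := xoutj _ (hqne (-3) (-1) (by omega) (by omega))
      (hqne (-3) 0 (by omega) (by omega)) (hqne (-3) 1 (by omega) (by omega))
    have xm2 : x (q (-2)) = β := xoutj _ (hqne (-2) (-1) (by omega) (by omega))
      (hqne (-2) 0 (by omega) (by omega)) (hqne (-2) 1 (by omega) (by omega))
    have x2 : x (q 2) = β := xoutj _ (hqne 2 (-1) (by omega) (by omega))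
      (hqne 2 0 (by omega) (by omega)) (hqne 2 1 (by omega) (by omega))
    have x3 : x (q 3) = β := xoutj _ (hqne 3 (-1) (by omega) (by omega))
      (hqne 3 0 (by omega) (by omega)) (hqne 3 1 (by omega) (by omega))
    -- neighbor identities
    have nb1 : q (-2) - 1 = q (-3) := by rw [hqsub]; norm_num
    have nb2 : q (-2) + 1 = q (-1) := by rw [hqadd]; norm_num
    have nb3 : q (-1) - 1 = q (-2) := by rw [hqsub]; norm_num
    have nb4 : q (-1) + 1 = q 0 := by rw [hqadd]; norm_num
    have nb5 : q 0 - 1 = q (-1) := by rw [hqsub]; norm_num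
    have nb6 : q 0 + 1 = q 1 := by rw [hqadd]; norm_num
    have nb7 : q 1 - 1 = q 0 := by rw [hqsub]; norm_num
    have nb8 : q 1 + 1 = q 2 := by rw [hqadd]; norm_num
    have nb9 : q 2 - 1 = q 1 := by rw [hqsub]; norm_num
    have nb10 : q 2 + 1 = q 3 := by rw [hqadd]; norm_num
    -- split sums
    rw [← Finset.sum_add_sum_compl s5 (fun j => (f j (x (j-1)) (x j) (x (j+1))).toNat),
        ← Finset.sum_add_sum_compl s3 (fun j => (x j).toNat)] at hx
    -- outside terms
    have gout : ∀ j ∈ s5ᶜ, (f j (x (j-1)) (x j) (x (j+1))).toNat = β.toNat := by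
      intro j hj
      rw [Finset.mem_compl, hs5def] at hj
      simp only [Finset.mem_insert, Finset.mem_singleton] at hj
      push_neg at hj
      obtain ⟨j2, j1, j0, jp1, jp2⟩ := hj
      have hm : ∀ e : ℤ, j - 1 = q e → j = q (e+1) := by
        intro e he; rw [← hqadd, ← he, sub_add_cancel]
      have hp : ∀ e : ℤ, j + 1 = q e → j = q (e-1) := by
        intro e he; rw [← hqsub, ← he, add_sub_cancel_right]
      rw [xoutj (j-1) (fun he => j0 (hm _ he)) (fun he => jp1 (hm _ he))
            (fun he => jp2 (by have := hm _ he; simpa using this)),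
          xoutj j j1 j0 jp1,
          xoutj (j+1) (fun he => j2 (by have := hp _ he; simpa using this))
            (fun he => j1 (hp _ he)) (fun he => j0 (hp _ he))]
      cases β
      · rw [h0 j]
      · rw [h1 j]
    have xout3 : ∀ j ∈ s3ᶜ, (x j).toNat = β.toNat := by
      intro j hj
      rw [Finset.mem_compl, hs3def] at hj
      simp only [Finset.mem_insert, Finset.mem_singleton] at hj
      push_neg at hj
      rw [xoutj j hj.1 hj.2.1 hj.2.2]
    have card3 : s3.card = 3 := by
      rw [hs3def]
      rw [Finset.card_insert_of_notMem (by
        simp [hqne (-1) 0 (by omega) (by omega), hqne (-1) 1 (by omega) (by omega)])]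
      rw [Finset.card_insert_of_notMem (by simp [hqne 0 1 (by omega) (by omega)])]
      simp
    have card5 : s5.card = 5 := by
      rw [hs5def]
      rw [Finset.card_insert_of_notMem (by
        simp [hqne (-2) (-1) (by omega) (by omega), hqne (-2) 0 (by omega) (by omega),
          hqne (-2) 1 (by omega) (by omega), hqne (-2) 2 (by omega) (by omega)])]
      rw [Finset.card_insert_of_notMem (by
        simp [hqne (-1) 0 (by omega) (by omega), hqne (-1) 1 (by omega) (by omega),
          hqne (-1) 2 (by omega) (by omega)])]
      rw [Finset.card_insert_of_notMem (by
        simp [hqne 0 1 (by omega) (by omega), hqne 0 2 (by omega) (by omega)])]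
      rw [Finset.card_insert_of_notMem (by simp [hqne 1 2 (by omega) (by omega)])]
      simp
    rw [Finset.sum_congr rfl gout, Finset.sum_congr rfl xout3, Finset.sum_const,
        Finset.sum_const, Finset.card_compl, Finset.card_compl, card3, card5,
        Fintype.card_fin, smul_eq_mul, smul_eq_mul] at hx
    -- inside sums
    have sum5 : ∑ j ∈ s5, (f j (x (j-1)) (x j) (x (j+1))).toNat
        = (f (q (-2)) β β a).toNat + ((f (q (-1)) β a b).toNat + ((f (q 0) a b c).toNat +
          ((f (q 1) b c β).toNat + (f (q 2) c β β).toNat))) := by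
      rw [hs5def]
      rw [Finset.sum_insert (by
        simp [hqne (-2) (-1) (by omega) (by omega), hqne (-2) 0 (by omega) (by omega),
          hqne (-2) 1 (by omega) (by omega), hqne (-2) 2 (by omega) (by omega)])]
      rw [Finset.sum_insert (by
        simp [hqne (-1) 0 (by omega) (by omega), hqne (-1) 1 (by omega) (by omega),
          hqne (-1) 2 (by omega) (by omega)])]
      rw [Finset.sum_insert (by
        simp [hqne 0 1 (by omega) (by omega), hqne 0 2 (by omega) (by omega)])]
      rw [Finset.sum_insert (by simp [hqne 1 2 (by omega) (by omega)])]
      rw [Finset.sum_singleton]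
      rw [nb1, nb2, nb3, nb4, nb5, nb6, nb7, nb8, nb9, nb10]
      rw [xm3, xm2, xm1, x0, x1, x2, x3]
    have sum3 : ∑ j ∈ s3, (x j).toNat = a.toNat + (b.toNat + c.toNat) := by
      rw [hs3def]
      rw [Finset.sum_insert (by
        simp [hqne (-1) 0 (by omega) (by omega), hqne (-1) 1 (by omega) (by omega)])]
      rw [Finset.sum_insert (by simp [hqne 0 1 (by omega) (by omega)])]
      rw [Finset.sum_singleton, xm1, x0, x1]
    rw [sum5, sum3] at hx
    exact hx
  -- instantiate
  have E1 := key false true false false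
  have E2 := key false false false true
  have E3 := key false true false true
  have E4 := key true false true true
  have E5 := key true true true false
  have E6 := key true false true false
  rw [hq0] at E1 E2 E3 E4 E5 E6
  simp only [h0, h1, Bool.toNat_false, Bool.toNat_true, mul_zero, mul_one, add_zero,
    zero_add] at E1 E2 E3 E4 E5 E6
  refine ⟨h0 i, h1 i, ?_, ?_⟩
  · rw [cond2, h0 i]
    cases hp : f i false false true <;> cases hqq : f i true false false <;>
      cases hr : f i true false true <;>
      first
        | decide
        | (simp only [hp, hqq, hr, Bool.toNat_false, Bool.toNat_true, zero_add,
             add_zero] at E1 E2 E3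
           omega)
  · rw [cond3, h1 i]
    cases hu : f i false true false <;> cases hv : f i false true true <;>
      cases hw : f i true true false <;>
      first
        | decide
        | (simp only [hu, hv, hw, Bool.toNat_false, Bool.toNat_true, zero_add,
             add_zero] at E4 E5 E6
           omega)
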